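/- Let 1 ≤ d ≤ n be integers and C₀ ≥ 1. Let ξ : ℝ → ℝ be continuous, nonnegative, vanishing outside (−1,1) and positive on (0,1), and set β = min{ ξ(s) : C₀^{−2/d}/4 ≤ s ≤ 1/2 } > 0 and γ = (8(1 + (2C₀)^{1/d} + C₀^{2/d}))^{−1}. Let ν be a finite Borel measure on ℝⁿ that is d-regular with constant C₀, let x ∈ supp ν and ε ∈ (0,1). Then for every finite Borel measure μ on ℝⁿ and every z ∈ ℝⁿ satisfying |x−z| + η_d(ν,μ) ≤ γ·ε, one has ∫ ξ(|y−z|/ε) dμ(y) ≥ β · C₀^{−1} · 2^{−(2d+1)} · ε^d. -/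

import Mathlib

open MeasureTheory

noncomputable section

/-- Support of a Borel measure: points all of whose open neighbourhoods have positive measure. -/
def msupport {X : Type*} [TopologicalSpace X] [MeasurableSpace X] (μ : Measure X) : Set X :=
  {x | ∀ U : Set X, IsOpen U → x ∈ U → 0 < μ U}

/-- `ν` is `d`-regular (Ahlfors regular) with constant `C₀ ≥ 1`:
`C₀⁻¹ r^d ≤ ν(B(x,r)) ≤ C₀ r^d` for every `x ∈ supp ν` and `r ∈ (0,2]`. -/
def IsDRegular {X : Type*} [MeasurableSpace X] [PseudoMetricSpace X]
    (d : ℕ) (C₀ : ℝ) (ν : Measure X) : Prop :=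
  ∀ x ∈ msupport ν, ∀ r : ℝ, r ∈ Set.Ioc (0 : ℝ) 2 →
    ENNReal.ofReal (C₀⁻¹ * r ^ d) ≤ ν (Metric.ball x r) ∧
    ν (Metric.ball x r) ≤ ENNReal.ofReal (C₀ * r ^ d)

/-- Modified Prokhorov distance
`η_d(μ,ν) = inf { δ > 0 : μ(B) ≤ ν(B^δ) + δ^d and ν(B) ≤ μ(B^δ) + δ^d for all closed balls B }`,
where `B^δ` is the open `δ`-neighbourhood (thickening) of `B`. -/
def etaDist {X : Type*} [MeasurableSpace X] [PseudoMetricSpace X]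
    (d : ℕ) (μ ν : Measure X) : ℝ :=
  sInf {δ : ℝ | 0 < δ ∧ ∀ (x : X) (r : ℝ),
    μ (Metric.closedBall x r) ≤
        ν (Metric.thickening δ (Metric.closedBall x r)) + ENNReal.ofReal (δ ^ d) ∧
    ν (Metric.closedBall x r) ≤
        μ (Metric.thickening δ (Metric.closedBall x r)) + ENNReal.ofReal (δ ^ d)}

open Metric Filter

private lemma aux_pow (A B : ℝ) (hB : 0 ≤ B) (hAB : B ≤ A) :
    ∀ k : ℕ, ((k : ℝ) + 1) * B ^ k * (A - B) ≤ A ^ (k + 1) - B ^ (k + 1) := by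
  intro k
  induction k with
  | zero => simp
  | succ k IH =>
    have hA : 0 ≤ A := hB.trans hAB
    have h0 : 0 ≤ ((k : ℝ) + 1) * B ^ k * (A - B) :=
      mul_nonneg (mul_nonneg (by positivity) (pow_nonneg hB k)) (by linarith)
    have h1 : A * (((k : ℝ) + 1) * B ^ k * (A - B)) ≤ A * (A ^ (k + 1) - B ^ (k + 1)) :=
      mul_le_mul_of_nonneg_left IH hA
    have h2 : B * (((k : ℝ) + 1) * B ^ k * (A - B)) ≤ A * (((k : ℝ) + 1) * B ^ k * (A - B)) :=
      mul_le_mul_of_nonneg_right hAB h0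
    have h3 : B ^ (k + 2) ≤ A * B ^ (k + 1) := by
      calc B ^ (k + 2) = B * B ^ (k + 1) := by ring
      _ ≤ A * B ^ (k + 1) := mul_le_mul_of_nonneg_right hAB (pow_nonneg hB _)
    have e1 : A ^ (k + 2) = A * A ^ (k + 1) := by ring
    have e2 : B ^ (k + 1) = B * B ^ k := by ring
    have e3 : ((k : ℝ) + 1 + 1) * B ^ (k + 1) * (A - B)
        = B * (((k : ℝ) + 1) * B ^ k * (A - B)) + (A * B ^ (k + 1) - B ^ (k + 2)) := by
      rw [e2]; ring
    push_cast
    nlinarith [h1, h2, e1, e3]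

private lemma core_ineq (k : ℕ) (A B Q P w : ℝ) (hB0 : 0 ≤ B) (hQ0 : 0 ≤ Q)
    (hP0 : 0 ≤ P) (hw : 0 ≤ w) (hABQ : w ≤ A - B - Q)
    (hBk : P ≤ B ^ k) (hQk : Q ^ k ≤ P) :
    P * w ≤ A ^ (k + 1) - Q ^ (k + 1) - B ^ (k + 1) := by
  have hk1 : (1 : ℝ) ≤ (k : ℝ) + 1 := by
    have := Nat.cast_nonneg (α := ℝ) k; linarith
  have hBA : B ≤ A := by linarith
  have hpow := aux_pow A B hB0 hBA k
  have hab : (0 : ℝ) ≤ A - B := by linarith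
  have hstep : ((k : ℝ) + 1) * P * (A - B) ≤ A ^ (k + 1) - B ^ (k + 1) := by
    refine le_trans ?_ hpow
    have := mul_le_mul_of_nonneg_right
      (mul_le_mul_of_nonneg_left hBk (by linarith : (0:ℝ) ≤ (k : ℝ) + 1)) hab
    linarith
  have hmηk : Q ^ (k + 1) ≤ P * Q := by
    calc Q ^ (k + 1) = Q ^ k * Q := by ring
    _ ≤ P * Q := mul_le_mul_of_nonneg_right hQk hQ0
  have hPk : P ≤ ((k : ℝ) + 1) * P := le_mul_of_one_le_left hP0 hk1
  have t1 : P * Q ≤ ((k : ℝ) + 1) * P * Q := mul_le_mul_of_nonneg_right hPk hQ0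
  have t2 : ((k : ℝ) + 1) * P * w ≤ ((k : ℝ) + 1) * P * (A - B - Q) :=
    mul_le_mul_of_nonneg_left hABQ (by positivity)
  have t3 : P * w ≤ ((k : ℝ) + 1) * P * w := mul_le_mul_of_nonneg_right hPk hw
  linarith [hstep, hmηk, t1, t2, t3]

private lemma key_alg (d : ℕ) (hd : 1 ≤ d) (C₀ c m ε s η : ℝ)
    (hC₀ : 1 ≤ C₀) (hc1 : 1 ≤ c) (hm1 : 1 ≤ m)
    (hcd : c ^ d = C₀ ^ 2) (hmd : m ^ d = 2 * C₀)
    (hε : 0 < ε) (hε1 : ε ≤ 1) (hη : 0 ≤ η) (hηs : η ≤ s) (hs0 : 0 ≤ s)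
    (hs : s ≤ (8 * (1 + m + c))⁻¹ * ε) :
    C₀⁻¹ * ((2 : ℝ) ^ (2 * d + 1))⁻¹ * ε ^ d ≤
      C₀⁻¹ * (ε / 2 - s) ^ d - 2 * η ^ d - C₀ * (c⁻¹ / 4 * ε + s) ^ d := by
  obtain ⟨k, rfl⟩ : ∃ k, d = k + 1 := ⟨d - 1, by omega⟩
  have hC₀0 : (0 : ℝ) < C₀ := by linarith
  have hc0 : (0 : ℝ) < c := by linarith
  have hm0 : (0 : ℝ) < m := by linarith
  have hden : (0 : ℝ) < 1 + m + c := by linarith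
  have hsb : s + m * s + c * s ≤ ε / 8 := by
    have h := mul_le_mul_of_nonneg_left hs hden.le
    have e : (1 + m + c) * ((8 * (1 + m + c))⁻¹ * ε) = ε / 8 := by
      field_simp
    rw [e] at h
    nlinarith [h]
  have hcs : 0 ≤ c * s := mul_nonneg hc0.le hs0
  have hms : 0 ≤ m * s := mul_nonneg hm0.le hs0
  have hmηms : m * η ≤ m * s := mul_le_mul_of_nonneg_left hηs hm0.le
  have hQ0 : (0 : ℝ) ≤ m * η := mul_nonneg hm0.le hη
  have hcore : ((2 : ℝ) ^ (2 * (k + 1) + 1))⁻¹ * ε ^ (k + 1) ≤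
      (ε / 2 - s) ^ (k + 1) - (m * η) ^ (k + 1) - (ε / 4 + c * s) ^ (k + 1) := by
    have h1 : (ε / 4) ^ k ≤ (ε / 4 + c * s) ^ k :=
      pow_le_pow_left₀ (by linarith) (by linarith) k
    have h2 : (m * η) ^ k ≤ (ε / 4) ^ k :=
      pow_le_pow_left₀ hQ0 (by linarith) k
    have h3 := core_ineq k (ε / 2 - s) (ε / 4 + c * s) (m * η) ((ε / 4) ^ k) (ε / 8)
      (by linarith) hQ0 (by positivity) (by linarith) (by linarith) h1 h2
    refine le_trans (le_of_eq ?_) h3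
    have h2p : (2 : ℝ) ^ (2 * (k + 1) + 1) = 8 * 4 ^ k := by
      rw [show 2 * (k + 1) + 1 = 2 * k + 3 by ring, pow_add, pow_mul]
      norm_num
      ring
    rw [h2p, div_pow]
    have h4 : (4 : ℝ) ^ k ≠ 0 := by positivity
    field_simp
    all_goals ring
  have e1 : 2 * η ^ (k + 1) = C₀⁻¹ * (m * η) ^ (k + 1) := by
    rw [mul_pow, hmd]
    field_simp
  have e2 : C₀ * (c⁻¹ / 4 * ε + s) ^ (k + 1) = C₀⁻¹ * (ε / 4 + c * s) ^ (k + 1) := by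
    have hBe : (ε / 4 + c * s) ^ (k + 1) = C₀ ^ 2 * (c⁻¹ / 4 * ε + s) ^ (k + 1) := by
      rw [← hcd, ← mul_pow]
      congr 1
      field_simp
    rw [hBe]
    field_simp
  rw [e1, e2]
  have hmul := mul_le_mul_of_nonneg_left hcore (inv_nonneg.mpr hC₀0.le)
  calc C₀⁻¹ * ((2:ℝ) ^ (2 * (k+1) + 1))⁻¹ * ε ^ (k+1)
      = C₀⁻¹ * (((2:ℝ) ^ (2 * (k+1) + 1))⁻¹ * ε ^ (k+1)) := by ring
  _ ≤ C₀⁻¹ * ((ε / 2 - s) ^ (k+1) - (m * η) ^ (k+1) - (ε / 4 + c * s) ^ (k+1)) := hmul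
  _ = C₀⁻¹ * (ε / 2 - s) ^ (k+1) - C₀⁻¹ * (m * η) ^ (k+1)
      - C₀⁻¹ * (ε / 4 + c * s) ^ (k+1) := by ring

set_option maxHeartbeats 1000000 in
theorem stmt10 {n : ℕ} (d : ℕ) (hd : 1 ≤ d) (hdn : d ≤ n) (C₀ : ℝ) (hC₀ : 1 ≤ C₀)
    (ξ : ℝ → ℝ) (hξc : Continuous ξ) (hξ0 : ∀ s, 0 ≤ ξ s)
    (hξsupp : ∀ s, s ∉ Set.Ioo (-1 : ℝ) 1 → ξ s = 0)
    (hξpos : ∀ s ∈ Set.Ioo (0 : ℝ) 1, 0 < ξ s)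
    (β γ : ℝ)
    (hβ : β = sInf (ξ '' Set.Icc (C₀ ^ (-(2 : ℝ) / d) / 4) (1 / 2)))
    (hγ : γ = (8 * (1 + (2 * C₀) ^ ((1 : ℝ) / d) + C₀ ^ ((2 : ℝ) / d)))⁻¹)
    (ν : Measure (EuclideanSpace ℝ (Fin n))) [IsFiniteMeasure ν]
    (hreg : IsDRegular d C₀ ν)
    (x : EuclideanSpace ℝ (Fin n)) (hx : x ∈ msupport ν)
    (ε : ℝ) (hε : ε ∈ Set.Ioo (0 : ℝ) 1) :
    0 < β ∧
    ∀ μ : Measure (EuclideanSpace ℝ (Fin n)), IsFiniteMeasure μ →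
      ∀ z : EuclideanSpace ℝ (Fin n), ‖x - z‖ + etaDist d ν μ ≤ γ * ε →
        β * C₀⁻¹ * ((2 : ℝ) ^ (2 * d + 1))⁻¹ * ε ^ d ≤ ∫ y, ξ (‖y - z‖ / ε) ∂μ := by
  obtain ⟨hε0, hε1⟩ := hε
  have hC₀0 : (0 : ℝ) < C₀ := by linarith
  have hdR : (0 : ℝ) < (d : ℝ) := by exact_mod_cast hd
  set c : ℝ := C₀ ^ ((2 : ℝ) / d) with hc
  set m : ℝ := (2 * C₀) ^ ((1 : ℝ) / d) with hm
  have hc0 : 0 < c := Real.rpow_pos_of_pos hC₀0 _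
  have hc1 : 1 ≤ c := Real.one_le_rpow hC₀ (by positivity)
  have hm1 : 1 ≤ m := Real.one_le_rpow (by linarith) (by positivity)
  have hcd : c ^ d = C₀ ^ 2 := by
    rw [hc, ← Real.rpow_natCast (C₀ ^ ((2 : ℝ) / d)) d, ← Real.rpow_mul hC₀0.le,
      div_mul_cancel₀ _ hdR.ne', show ((2 : ℝ) = ((2 : ℕ) : ℝ)) by norm_num,
      Real.rpow_natCast]
  have hmd : m ^ d = 2 * C₀ := by
    rw [hm, ← Real.rpow_natCast ((2 * C₀) ^ ((1 : ℝ) / d)) d, ← Real.rpow_mul (by linarith),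
      one_div, inv_mul_cancel₀ hdR.ne', Real.rpow_one]
  set a : ℝ := C₀ ^ (-(2 : ℝ) / d) / 4 with ha
  have hac : a = c⁻¹ / 4 := by
    rw [ha, hc, neg_div, Real.rpow_neg hC₀0.le]
  have ha0 : 0 < a := by rw [hac]; positivity
  have ha14 : a ≤ 1 / 4 := by
    rw [hac]
    have h1 : c⁻¹ ≤ 1 := by
      rw [inv_le_one_iff₀]; right; exact hc1
    linarith
  -- gamma facts
  have hγeq : γ = (8 * (1 + m + c))⁻¹ := hγ
  have hden : (0 : ℝ) < 1 + m + c := by linarith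
  have hγpos : 0 < γ := by rw [hγeq]; positivity
  have hγ24 : γ ≤ 1 / 24 := by
    rw [hγeq, inv_le_comm₀ (by linarith) (by norm_num)]
    linarith
  -- beta facts
  have hKsub : Set.Icc a (1 / 2 : ℝ) ⊆ Set.Ioo 0 1 := by
    intro t ht
    exact ⟨lt_of_lt_of_le ha0 ht.1, lt_of_le_of_lt ht.2 (by norm_num)⟩
  have hKne : (Set.Icc a (1 / 2 : ℝ)).Nonempty := ⟨a, le_refl a, by linarith⟩
  have himg : IsCompact (ξ '' Set.Icc a (1 / 2)) := isCompact_Icc.image hξc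
  have hβmem : β ∈ ξ '' Set.Icc a (1 / 2) := by
    rw [hβ]; exact himg.sInf_mem (hKne.image ξ)
  obtain ⟨s₀, hs₀, hξs₀⟩ := hβmem
  have hβpos : 0 < β := hξs₀ ▸ hξpos s₀ (hKsub hs₀)
  have hβle : ∀ t ∈ Set.Icc a (1 / 2 : ℝ), β ≤ ξ t := by
    intro t ht
    rw [hβ]
    exact csInf_le himg.bddBelow (Set.mem_image_of_mem ξ ht)
  refine ⟨hβpos, ?_⟩
  intro μ hμfin z hz
  haveI := hμfin
  set e : ℝ := ‖x - z‖ with he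
  have he0 : 0 ≤ e := norm_nonneg _
  set S : Set ℝ := {δ : ℝ | 0 < δ ∧ ∀ (x' : EuclideanSpace ℝ (Fin n)) (r : ℝ),
    ν (Metric.closedBall x' r) ≤
        μ (Metric.thickening δ (Metric.closedBall x' r)) + ENNReal.ofReal (δ ^ d) ∧
    μ (Metric.closedBall x' r) ≤
        ν (Metric.thickening δ (Metric.closedBall x' r)) + ENNReal.ofReal (δ ^ d)} with hS
  set η : ℝ := etaDist d ν μ with hη
  have hηdef : η = sInf S := rfl
  have hez : e + η ≤ γ * ε := hz
  have hSne : S.Nonempty := by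
    set D : ℝ := (ν Set.univ).toReal + (μ Set.univ).toReal + 1 with hD
    have hν0 : 0 ≤ (ν Set.univ).toReal := ENNReal.toReal_nonneg
    have hμ0 : 0 ≤ (μ Set.univ).toReal := ENNReal.toReal_nonneg
    have hD1 : 1 ≤ D := by rw [hD]; linarith
    have hDd : D ≤ D ^ d := le_self_pow₀ (by linarith) (by omega)
    refine ⟨D, by linarith, fun x' r => ?_⟩
    constructor
    · refine le_trans ?_ le_add_self
      calc ν (closedBall x' r) ≤ ν Set.univ := measure_mono (Set.subset_univ _)
      _ = ENNReal.ofReal ((ν Set.univ).toReal) :=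
          (ENNReal.ofReal_toReal (measure_ne_top ν _)).symm
      _ ≤ ENNReal.ofReal (D ^ d) := ENNReal.ofReal_le_ofReal (by linarith)
    · refine le_trans ?_ le_add_self
      calc μ (closedBall x' r) ≤ μ Set.univ := measure_mono (Set.subset_univ _)
      _ = ENNReal.ofReal ((μ Set.univ).toReal) :=
          (ENNReal.ofReal_toReal (measure_ne_top μ _)).symm
      _ ≤ ENNReal.ofReal (D ^ d) := ENNReal.ofReal_le_ofReal (by linarith)
  have hη0 : 0 ≤ η := by
    rw [hηdef]
    exact le_csInf hSne fun δ hδ => hδ.1.le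
  have hmemS : ∀ δ : ℝ, η < δ → δ ∈ S := by
    intro δ hδlt
    rw [hηdef] at hδlt
    obtain ⟨δ₀, hδ₀S, hlt⟩ := exists_lt_of_csInf_lt hSne hδlt
    refine ⟨hδ₀S.1.trans hlt, fun x' r => ?_⟩
    obtain ⟨h1, h2⟩ := hδ₀S.2 x' r
    have hpw : ENNReal.ofReal (δ₀ ^ d) ≤ ENNReal.ofReal (δ ^ d) :=
      ENNReal.ofReal_le_ofReal (pow_le_pow_left₀ hδ₀S.1.le hlt.le d)
    exact ⟨h1.trans (add_le_add (measure_mono (thickening_mono hlt.le _)) hpw),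
      h2.trans (add_le_add (measure_mono (thickening_mono hlt.le _)) hpw)⟩
  -- the annulus
  set Ann : Set (EuclideanSpace ℝ (Fin n)) := closedBall z (ε / 2) \ ball z (a * ε)
    with hAnn
  have hAnnMeas : MeasurableSet Ann := measurableSet_closedBall.diff measurableSet_ball
  have hxz : dist x z = e := by rw [he, dist_eq_norm]
  have haε14 : a * ε ≤ 1 / 4 := by nlinarith
  have haε0 : 0 < a * ε := by positivity
  -- main measure estimate for admissible δ
  have hmain : ∀ δ : ℝ, δ ∈ S → e + δ < ε / 2 →
      C₀⁻¹ * (ε / 2 - (e + δ)) ^ d - 2 * δ ^ d - C₀ * (a * ε + (e + δ)) ^ d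
        ≤ (μ Ann).toReal := by
    rintro δ ⟨hδ0, hδprop⟩ hδhalf
    obtain ⟨hν₁, -⟩ := hreg x hx (ε / 2 - (e + δ)) ⟨by linarith, by linarith⟩
    obtain ⟨-, hν₂⟩ := hreg x hx (a * ε + (e + δ)) ⟨by linarith, by linarith⟩
    obtain ⟨hxr₁, -⟩ := hδprop x (ε / 2 - (e + δ))
    obtain ⟨-, hza⟩ := hδprop z (a * ε)
    have incl1 : thickening δ (closedBall x (ε / 2 - (e + δ))) ⊆ closedBall z (ε / 2) := by
      intro y hy
      rw [mem_thickening_iff] at hy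
      obtain ⟨p, hp, hyp⟩ := hy
      rw [mem_closedBall] at hp ⊢
      have h4 := dist_triangle4 y p x z
      rw [hxz] at h4
      linarith
    have incl2 : thickening δ (closedBall z (a * ε)) ⊆ ball x (a * ε + (e + δ)) := by
      intro y hy
      rw [mem_thickening_iff] at hy
      obtain ⟨p, hp, hyp⟩ := hy
      rw [mem_closedBall] at hp
      rw [mem_ball]
      have h4 := dist_triangle4 y p z x
      have hzx : dist z x = e := by rw [dist_comm, hxz]
      rw [hzx] at h4
      linarith
    have hcover : closedBall z (ε / 2) ⊆ Ann ∪ closedBall z (a * ε) := by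
      intro y hy
      by_cases hmem : y ∈ ball z (a * ε)
      · exact Or.inr (ball_subset_closedBall hmem)
      · exact Or.inl ⟨hy, hmem⟩
    have hnn1 : 0 ≤ C₀ * (a * ε + (e + δ)) ^ d :=
      mul_nonneg hC₀0.le (pow_nonneg (by linarith) d)
    have hnn2 : 0 ≤ δ ^ d := pow_nonneg hδ0.le d
    have c1 : ENNReal.ofReal (C₀⁻¹ * (ε / 2 - (e + δ)) ^ d) ≤
        μ Ann + ENNReal.ofReal (C₀ * (a * ε + (e + δ)) ^ d + 2 * δ ^ d) := by
      have step1 : ν (closedBall x (ε / 2 - (e + δ))) ≤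
          μ (closedBall z (ε / 2)) + ENNReal.ofReal (δ ^ d) :=
        hxr₁.trans (add_le_add_left (measure_mono incl1) _)
      have step2 : μ (closedBall z (ε / 2)) ≤ μ Ann + μ (closedBall z (a * ε)) :=
        (measure_mono hcover).trans (measure_union_le _ _)
      have step3 : μ (closedBall z (a * ε)) ≤
          ENNReal.ofReal (C₀ * (a * ε + (e + δ)) ^ d) + ENNReal.ofReal (δ ^ d) :=
        hza.trans (add_le_add_left ((measure_mono incl2).trans hν₂) _)
      calc ENNReal.ofReal (C₀⁻¹ * (ε / 2 - (e + δ)) ^ d)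
          ≤ ν (ball x (ε / 2 - (e + δ))) := hν₁
        _ ≤ ν (closedBall x (ε / 2 - (e + δ))) := measure_mono ball_subset_closedBall
        _ ≤ μ (closedBall z (ε / 2)) + ENNReal.ofReal (δ ^ d) := step1
        _ ≤ (μ Ann + μ (closedBall z (a * ε))) + ENNReal.ofReal (δ ^ d) :=
            add_le_add_left step2 _
        _ ≤ (μ Ann + (ENNReal.ofReal (C₀ * (a * ε + (e + δ)) ^ d) + ENNReal.ofReal (δ ^ d)))
              + ENNReal.ofReal (δ ^ d) := add_le_add_left (add_le_add_right step3 _) _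
        _ = μ Ann + ENNReal.ofReal (C₀ * (a * ε + (e + δ)) ^ d + 2 * δ ^ d) := by
            rw [add_assoc, add_assoc]
            congr 1
            rw [← add_assoc, ← ENNReal.ofReal_add hnn1 hnn2,
              ← ENNReal.ofReal_add (by linarith) hnn2]
            congr 1
            ring
    have hfin : μ Ann + ENNReal.ofReal (C₀ * (a * ε + (e + δ)) ^ d + 2 * δ ^ d) ≠ ⊤ := by
      finiteness
    have c4 := (ENNReal.ofReal_le_iff_le_toReal hfin).mp c1
    rw [ENNReal.toReal_add (measure_ne_top μ _) ENNReal.ofReal_ne_top,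
      ENNReal.toReal_ofReal (by linarith)] at c4
    linarith
  -- pass to the limit δ → η
  have hγεe : e + η ≤ ε / 24 := by
    have h := mul_le_mul_of_nonneg_right hγ24 hε0.le
    linarith
  have hpos2 : 0 < ε / 2 - (e + η) := by linarith
  have hlim : C₀⁻¹ * (ε / 2 - (e + η)) ^ d - 2 * η ^ d - C₀ * (a * ε + (e + η)) ^ d
      ≤ (μ Ann).toReal := by
    have contG : Continuous (fun t : ℝ =>
        C₀⁻¹ * (ε / 2 - (e + t)) ^ d - 2 * t ^ d - C₀ * (a * ε + (e + t)) ^ d) := by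
      fun_prop
    have tend0 : Tendsto (fun nn : ℕ => (1 : ℝ) / (nn + 1)) atTop (nhds 0) :=
      tendsto_one_div_add_atTop_nhds_zero_nat
    have tendδ : Tendsto (fun nn : ℕ => η + 1 / (nn + 1)) atTop (nhds η) := by
      have h : Tendsto (fun nn : ℕ => η + 1 / ((nn : ℝ) + 1)) atTop (nhds (η + 0)) :=
        Tendsto.add tendsto_const_nhds tend0
      simpa using h
    refine le_of_tendsto ((contG.tendsto η).comp tendδ) ?_
    have hev : ∀ᶠ nn : ℕ in atTop, (1 : ℝ) / (nn + 1) < ε / 2 - (e + η) :=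
      tend0.eventually_lt_const hpos2
    filter_upwards [hev] with nn hnn
    have hδpos : (0 : ℝ) < 1 / (nn + 1) := by positivity
    have hδS : (η + 1 / (nn + 1)) ∈ S := hmemS _ (by linarith)
    have := hmain (η + 1 / (nn + 1)) hδS (by linarith)
    simpa [Function.comp] using this
  -- algebra
  have hsiff : e + η ≤ (8 * (1 + m + c))⁻¹ * ε := by rw [← hγeq]; exact hez
  have halg := key_alg d hd C₀ c m ε (e + η) η hC₀ hc1 hm1 hcd hmd hε0 hε1.le hη0
    (by linarith) (by linarith) hsiff
  rw [← hac] at halg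
  have hAnnLB : C₀⁻¹ * ((2 : ℝ) ^ (2 * d + 1))⁻¹ * ε ^ d ≤ (μ Ann).toReal := by
    have : a * ε = a * ε := rfl
    nlinarith [halg, hlim]
  -- integral estimate
  have hfc : Continuous (fun y : EuclideanSpace ℝ (Fin n) => ξ (‖y - z‖ / ε)) :=
    hξc.comp (((continuous_id.sub continuous_const).norm).div_const ε)
  have hsupp : HasCompactSupport (fun y : EuclideanSpace ℝ (Fin n) => ξ (‖y - z‖ / ε)) := by
    apply HasCompactSupport.intro (isCompact_closedBall z ε)
    intro y hy
    apply hξsupp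
    intro hmem
    apply hy
    rw [mem_closedBall, dist_eq_norm]
    exact le_of_lt ((div_lt_one hε0).mp hmem.2)
  have hfint : Integrable (fun y : EuclideanSpace ℝ (Fin n) => ξ (‖y - z‖ / ε)) μ :=
    hfc.integrable_of_hasCompactSupport hsupp
  have hind : Integrable (Ann.indicator (fun _ => β)) μ :=
    (integrable_const β).indicator hAnnMeas
  have hmono : ∀ y, Ann.indicator (fun _ => β) y ≤ ξ (‖y - z‖ / ε) := by
    intro y
    by_cases hy : y ∈ Ann
    · rw [Set.indicator_of_mem hy]
      obtain ⟨hy1, hy2⟩ := hy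
      rw [mem_closedBall] at hy1
      rw [mem_ball] at hy2
      have hy2' : a * ε ≤ dist y z := not_lt.mp hy2
      have hdist : dist y z = ‖y - z‖ := dist_eq_norm y z
      apply hβle
      constructor
      · rw [le_div_iff₀ hε0, ← hdist]
        exact hy2'
      · rw [div_le_iff₀ hε0, ← hdist]
        linarith
    · rw [Set.indicator_of_notMem hy]
      exact hξ0 _
  have hint1 : ∫ y, Ann.indicator (fun _ => β) y ∂μ ≤ ∫ y, ξ (‖y - z‖ / ε) ∂μ :=
    integral_mono hind hfint hmono
  rw [integral_indicator_const β hAnnMeas, smul_eq_mul] at hint1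
  calc β * C₀⁻¹ * ((2 : ℝ) ^ (2 * d + 1))⁻¹ * ε ^ d
      = β * (C₀⁻¹ * ((2 : ℝ) ^ (2 * d + 1))⁻¹ * ε ^ d) := by ring
    _ ≤ β * (μ Ann).toReal := mul_le_mul_of_nonneg_left hAnnLB hβpos.le
    _ = (μ Ann).toReal * β := by ring
    _ ≤ ∫ y, ξ (‖y - z‖ / ε) ∂μ := hint1

end
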